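/- Let G = A * B with distinct nontrivial a, c, f ∈ A and nontrivial b ∈ B. For n ≥ 1 set g_n = v w v w² ⋯ v wⁿ v where v = b a b c and w = b f. Then Δ₂(g_n) = n for all n ≥ 1. -/

import Mathlib

open Monoid Monoid.CoprodI

attribute [local instance] Classical.propDecidable

/-- The list of syllables of the reduced word representing `g`. -/
noncomputable def syllables {ι : Type*} {M : ι → Type*} [∀ i, Group (M i)]
    (g : CoprodI M) : List (Σ i, M i) :=
  letI := Classical.decEq ι
  letI : ∀ i, DecidableEq (M i) := fun _ => Classical.decEq _
  (Word.equiv g).toList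

/-- `g` is a palindrome iff its reduced word reads the same backwards. -/
noncomputable def IsPalindrome {ι : Type*} {M : ι → Type*} [∀ i, Group (M i)]
    (g : CoprodI M) : Prop :=
  (syllables g).reverse = syllables g

/-- `segCount2 sa sc m n g` is the number of `a`-segments of type `(m,n)` in the
reduced form of `g`: triples `p < r < q` where `p, q` are consecutive occurrences
of the syllable `sa`, `r` is the unique occurrence of the syllable `sc` strictly
between them, with `m` syllables before `sc` and `n` syllables after it. -/
noncomputable def segCount2 {ι : Type*} {M : ι → Type*} [∀ i, Group (M i)]
    (sa sc : Σ i, M i) (m n : ℕ) (g : CoprodI M) : ℕ :=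
  (((Finset.range (syllables g).length ×ˢ Finset.range (syllables g).length) ×ˢ
      Finset.range (syllables g).length).filter
    (fun t => t.1.1 < t.1.2 ∧ t.1.2 < t.2 ∧
      (syllables g)[t.1.1]? = some sa ∧ (syllables g)[t.2]? = some sa ∧
      (syllables g)[t.1.2]? = some sc ∧
      (∀ u ∈ Finset.Ioo t.1.1 t.2, (syllables g)[u]? ≠ some sa) ∧
      (∀ u ∈ Finset.Ioo t.1.1 t.2, u ≠ t.1.2 → (syllables g)[u]? ≠ some sc) ∧
      t.1.2 - t.1.1 = m + 1 ∧ t.2 - t.1.2 = n + 1)).card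


/-- The quasi-homomorphism `Δ₂(g) = Σ_{m<n} t_{m,n}(g)` (a finite sum), where
`t_{m,n} = d_{m,n} - d_{n,m}`. -/
noncomputable def Delta2 {ι : Type*} {M : ι → Type*} [∀ i, Group (M i)]
    (sa sc : Σ i, M i) (g : CoprodI M) : ℤ :=
  ∑ᶠ p : ℕ × ℕ, if p.1 < p.2 then
    (segCount2 sa sc p.1 p.2 g : ℤ) - segCount2 sa sc p.2 p.1 g else 0

set_option linter.unusedSectionVars false
set_option maxHeartbeats 1000000

namespace D2Aux

lemma syllables_eq_of_prod {ι : Type*} {M : ι → Type*} [∀ i, Group (M i)]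
    {g : CoprodI M} (w : Word M) (h : w.prod = g) : syllables g = w.toList := by
  letI := Classical.decEq ι
  letI : ∀ i, DecidableEq (M i) := fun _ => Classical.decEq _
  have : Word.equiv g = w := by
    subst h
    exact Word.equiv.apply_symm_apply w
  unfold syllables
  rw [this]

variable {M : Bool → Type*} [∀ b, Group (M b)]

def Vl (a c : M true) (b : M false) : List (Σ i, M i) :=
  [⟨false, b⟩, ⟨true, a⟩, ⟨false, b⟩, ⟨true, c⟩]

def Wl (f : M true) (b : M false) : ℕ → List (Σ i, M i)
  | 0 => []
  | k + 1 => Wl f b k ++ [⟨false, b⟩, ⟨true, f⟩]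

def Ll (a c f : M true) (b : M false) : ℕ → List (Σ i, M i)
  | 0 => Vl a c b
  | n + 1 => Ll a c f b n ++ Wl f b (n + 1) ++ Vl a c b

def posL (i : ℕ) : ℕ := i * i + 5 * i

variable (a c f : M true) (b : M false)

lemma lenW : ∀ k, (Wl f b k).length = 2 * k
  | 0 => rfl
  | k + 1 => by simp [Wl, lenW k]; omega

lemma lenL : ∀ n, (Ll a c f b n).length = n * n + 5 * n + 4
  | 0 => rfl
  | n + 1 => by
      simp [Ll, lenL n, lenW, Vl]
      ring_nf

lemma posL_le {i j : ℕ} (h : i ≤ j) : posL i ≤ posL j := by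
  have := Nat.mul_le_mul h h
  unfold posL; omega

lemma posL_succ (i : ℕ) : posL (i + 1) = posL i + 2 * i + 6 := by
  unfold posL; ring

lemma posL_add {i j : ℕ} (h : i < j) : posL i + 2 * i + 6 ≤ posL j := by
  rw [← posL_succ]; exact posL_le h

lemma posL_lt {i j : ℕ} (h : i < j) : posL i < posL j := by
  have := posL_add h; omega

lemma posL_lt_iff {i j : ℕ} : posL i < posL j ↔ i < j := by
  constructor
  · intro h; by_contra hij; exact absurd (posL_le (not_lt.mp hij)) (by omega)
  · exact posL_lt

lemma posL_lt_lenL {i n : ℕ} (h : i ≤ n) : posL i + 3 < n * n + 5 * n + 4 := by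
  have := posL_le h; unfold posL at *; omega

lemma mem_Wl {x : Σ i, M i} : ∀ {k}, x ∈ Wl f b k → x = ⟨false, b⟩ ∨ x = ⟨true, f⟩ := by
  intro k
  induction k with
  | zero => simp [Wl]
  | succ k ih =>
    simp only [Wl, List.mem_append, List.mem_cons, List.mem_singleton]
    rintro (h | h | h | h) <;>
      [exact ih h; exact Or.inl h; exact Or.inr h; exact absurd h (by simp)]

lemma wl_get_ne {x : M true} : ∀ (hfx : f ≠ x) (k j : ℕ),
    (Wl f b k)[j]? ≠ some (⟨true, x⟩ : Σ i, M i) := by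
  intro hfx k j h
  have hm : (⟨true, x⟩ : Σ i, M i) ∈ Wl f b k := by
    exact List.mem_of_getElem? h
  rcases mem_Wl f b hm with h' | h' <;> simp [Sigma.ext_iff] at h'
  exact hfx h'.symm

lemma vl_a (hac : a ≠ c) : ∀ j, (Vl a c b)[j]? = some (⟨true, a⟩ : Σ i, M i) ↔ j = 1 := by
  intro j
  rcases j with _ | _ | _ | _ | j <;> simp [Vl, Sigma.ext_iff, Ne.symm hac]

lemma vl_c (hac : a ≠ c) : ∀ j, (Vl a c b)[j]? = some (⟨true, c⟩ : Σ i, M i) ↔ j = 3 := by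
  intro j
  rcases j with _ | _ | _ | _ | j <;> simp [Vl, Sigma.ext_iff, hac]

lemma getA (hac : a ≠ c) (haf : a ≠ f) :
    ∀ n k, (Ll a c f b n)[k]? = some (⟨true, a⟩ : Σ i, M i) ↔ ∃ i ≤ n, k = posL i + 1 := by
  intro n
  induction n with
  | zero =>
    intro k
    rw [show Ll a c f b 0 = Vl a c b from rfl, vl_a a c b hac]
    constructor
    · rintro rfl; exact ⟨0, le_refl 0, rfl⟩
    · rintro ⟨i, hi, rfl⟩; interval_cases i; rfl
  | succ n ih =>
    intro k
    have hlen : (Ll a c f b n).length = n * n + 5 * n + 4 := lenL a c f b n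
    have hsq : (n + 1) * (n + 1) = n * n + 2 * n + 1 := by ring
    rw [show Ll a c f b (n+1) = Ll a c f b n ++ Wl f b (n+1) ++ Vl a c b from rfl,
      List.append_assoc]
    by_cases hk : k < (Ll a c f b n).length
    · rw [List.getElem?_append_left hk, ih k]
      constructor
      · rintro ⟨i, hi, rfl⟩; exact ⟨i, by omega, rfl⟩
      · rintro ⟨i, hi, rfl⟩
        rcases Nat.lt_or_ge i (n + 1) with h' | h'
        · exact ⟨i, by omega, rfl⟩
        · exfalso
          have : posL (n + 1) ≤ posL i := posL_le h'
          unfold posL at this hk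
          omega
    · push_neg at hk
      rw [List.getElem?_append_right hk]
      by_cases hk2 : k - (Ll a c f b n).length < (Wl f b (n+1)).length
      · rw [List.getElem?_append_left hk2]
        constructor
        · intro h; exact absurd h (wl_get_ne f b (Ne.symm haf) _ _)
        · rintro ⟨i, hi, rfl⟩
          exfalso
          rw [lenW] at hk2
          rcases Nat.lt_or_ge i (n + 1) with h' | h'
          · have := posL_le (show i ≤ n by omega)
            unfold posL at this hk
            omega
          · have hi' : i = n + 1 := by omega
            subst hi'
            rw [posL_succ] at hk hk2
            unfold posL at hk hk2
            omega
      · push_neg at hk2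
        rw [List.getElem?_append_right hk2, vl_a a c b hac]
        rw [lenW] at hk2 ⊢
        constructor
        · intro h
          refine ⟨n + 1, le_refl _, ?_⟩
          rw [posL_succ]; unfold posL
          omega
        · rintro ⟨i, hi, rfl⟩
          rcases Nat.lt_or_ge i (n + 1) with h' | h'
          · exfalso
            have := posL_le (show i ≤ n by omega)
            unfold posL at this hk
            omega
          · have hi' : i = n + 1 := by omega
            subst hi'
            rw [posL_succ] at *
            unfold posL at *
            omega

lemma getC (hac : a ≠ c) (hcf : c ≠ f) :
    ∀ n k, (Ll a c f b n)[k]? = some (⟨true, c⟩ : Σ i, M i) ↔ ∃ i ≤ n, k = posL i + 3 := by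
  intro n
  induction n with
  | zero =>
    intro k
    rw [show Ll a c f b 0 = Vl a c b from rfl, vl_c a c b hac]
    constructor
    · rintro rfl; exact ⟨0, le_refl 0, rfl⟩
    · rintro ⟨i, hi, rfl⟩; interval_cases i; rfl
  | succ n ih =>
    intro k
    have hlen : (Ll a c f b n).length = n * n + 5 * n + 4 := lenL a c f b n
    have hsq : (n + 1) * (n + 1) = n * n + 2 * n + 1 := by ring
    rw [show Ll a c f b (n+1) = Ll a c f b n ++ Wl f b (n+1) ++ Vl a c b from rfl,
      List.append_assoc]
    by_cases hk : k < (Ll a c f b n).length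
    · rw [List.getElem?_append_left hk, ih k]
      constructor
      · rintro ⟨i, hi, rfl⟩; exact ⟨i, by omega, rfl⟩
      · rintro ⟨i, hi, rfl⟩
        rcases Nat.lt_or_ge i (n + 1) with h' | h'
        · exact ⟨i, by omega, rfl⟩
        · exfalso
          have : posL (n + 1) ≤ posL i := posL_le h'
          unfold posL at this hk
          omega
    · push_neg at hk
      rw [List.getElem?_append_right hk]
      by_cases hk2 : k - (Ll a c f b n).length < (Wl f b (n+1)).length
      · rw [List.getElem?_append_left hk2]
        constructor
        · intro h; exact absurd h (wl_get_ne f b (Ne.symm hcf) _ _)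
        · rintro ⟨i, hi, rfl⟩
          exfalso
          rw [lenW] at hk2
          rcases Nat.lt_or_ge i (n + 1) with h' | h'
          · have := posL_le (show i ≤ n by omega)
            unfold posL at this hk
            omega
          · have hi' : i = n + 1 := by omega
            subst hi'
            rw [posL_succ] at hk hk2
            unfold posL at hk hk2
            omega
      · push_neg at hk2
        rw [List.getElem?_append_right hk2, vl_c a c b hac]
        rw [lenW] at hk2 ⊢
        constructor
        · intro h
          refine ⟨n + 1, le_refl _, ?_⟩
          rw [posL_succ]; unfold posL
          omega
        · rintro ⟨i, hi, rfl⟩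
          rcases Nat.lt_or_ge i (n + 1) with h' | h'
          · exfalso
            have := posL_le (show i ≤ n by omega)
            unfold posL at this hk
            omega
          · have hi' : i = n + 1 := by omega
            subst hi'
            rw [posL_succ] at *
            unfold posL at *
            omega


lemma mem_Ll {x : Σ i, M i} : ∀ {n}, x ∈ Ll a c f b n →
    x = ⟨false, b⟩ ∨ x = ⟨true, a⟩ ∨ x = ⟨true, c⟩ ∨ x = ⟨true, f⟩ := by
  intro n
  induction n with
  | zero => simp [Ll, Vl]; tauto
  | succ n ih =>
    simp only [Ll, List.mem_append]
    rintro ((h | h) | h)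
    · exact ih h
    · rcases mem_Wl f b h with h | h <;> tauto
    · simp [Vl] at h; tauto

lemma wl_ne_nil {k : ℕ} (hk : 0 < k) : Wl f b k ≠ [] := by
  have := lenW f b k
  intro h; rw [h] at this; simp at this; omega

lemma wl_head? {k : ℕ} (hk : 0 < k) : (Wl f b k).head? = some ⟨false, b⟩ := by
  induction k with
  | zero => omega
  | succ k ih =>
    rcases Nat.eq_zero_or_pos k with rfl | hk'
    · rfl
    · rw [show Wl f b (k+1) = Wl f b k ++ [⟨false, b⟩, ⟨true, f⟩] from rfl,
        List.head?_append_of_ne_nil _ (wl_ne_nil f b hk')]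
      exact ih hk'

lemma wl_getLast? {k : ℕ} (hk : 0 < k) : (Wl f b k).getLast? = some ⟨true, f⟩ := by
  rcases k with _ | k
  · omega
  · rw [show Wl f b (k+1) = Wl f b k ++ [⟨false, b⟩, ⟨true, f⟩] from rfl,
      List.getLast?_append_of_ne_nil _ (by simp)]
    rfl

lemma wl_chain (k : ℕ) : (Wl f b k).Chain' (fun l l' => l.fst ≠ l'.fst) := by
  induction k with
  | zero => simp [Wl, List.Chain']
  | succ k ih =>
    rw [show Wl f b (k+1) = Wl f b k ++ [⟨false, b⟩, ⟨true, f⟩] from rfl,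
      List.Chain', List.isChain_append]
    refine ⟨ih, by simp, ?_⟩
    intro x hx y hy
    rcases Nat.eq_zero_or_pos k with rfl | hk'
    · simp [Wl] at hx
    · rw [wl_getLast? f b hk'] at hx
      simp at hx hy
      subst hx; subst hy
      simp

lemma ll_getLast? (n : ℕ) : (Ll a c f b n).getLast? = some ⟨true, c⟩ := by
  cases n with
  | zero => rfl
  | succ n =>
    rw [show Ll a c f b (n+1) = Ll a c f b n ++ Wl f b (n+1) ++ Vl a c b from rfl,
      List.getLast?_append_of_ne_nil _ (by simp [Vl])]
    rfl

lemma ll_chain (n : ℕ) : (Ll a c f b n).Chain' (fun l l' => l.fst ≠ l'.fst) := by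
  induction n with
  | zero => simp [Ll, Vl, List.Chain']
  | succ n ih =>
    rw [show Ll a c f b (n+1) = Ll a c f b n ++ Wl f b (n+1) ++ Vl a c b from rfl,
      List.Chain', List.isChain_append, List.isChain_append]
    refine ⟨⟨ih, wl_chain f b (n+1), ?_⟩, by simp [Vl], ?_⟩
    · intro x hx y hy
      rw [ll_getLast? a c f b n] at hx
      rw [wl_head? f b (by omega)] at hy
      simp at hx hy; subst hx; subst hy; simp
    · intro x hx y hy
      rw [List.getLast?_append_of_ne_nil _ (wl_ne_nil f b (by omega)),
        wl_getLast? f b (by omega)] at hx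
      simp [Vl] at hx hy; subst hx; subst hy; simp

noncomputable def wordL (ha : a ≠ 1) (hc : c ≠ 1) (hf : f ≠ 1) (hb : b ≠ 1) (n : ℕ) :
    Word M where
  toList := Ll a c f b n
  ne_one := by
    intro l hl
    rcases mem_Ll a c f b hl with rfl | rfl | rfl | rfl <;> assumption
  chain_ne := ll_chain a c f b n

lemma prod_Wl : ∀ k, ((Wl f b k).map fun l => CoprodI.of l.2).prod
    = (CoprodI.of b * CoprodI.of f) ^ k := by
  intro k
  induction k with
  | zero => simp [Wl]
  | succ k ih =>
    rw [show Wl f b (k+1) = Wl f b k ++ [⟨false, b⟩, ⟨true, f⟩] from rfl]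
    simp only [List.map_append, List.prod_append, ih]
    simp [pow_succ, mul_assoc]

lemma prod_Ll : ∀ n, ((Ll a c f b n).map fun l => CoprodI.of l.2).prod
    = ((List.range n).map (fun i =>
        (CoprodI.of b * CoprodI.of a * CoprodI.of b * CoprodI.of c) *
          (CoprodI.of b * CoprodI.of f) ^ (i + 1))).prod *
      (CoprodI.of b * CoprodI.of a * CoprodI.of b * CoprodI.of c) := by
  intro n
  induction n with
  | zero => simp [Ll, Vl, mul_assoc]
  | succ n ih =>
    rw [show Ll a c f b (n+1) = Ll a c f b n ++ Wl f b (n+1) ++ Vl a c b from rfl]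
    simp only [List.map_append, List.prod_append, ih, prod_Wl, List.range_succ,
      List.map_append, List.prod_append]
    simp [Vl, mul_assoc]

lemma syllables_gn (ha : a ≠ 1) (hc : c ≠ 1) (hf : f ≠ 1) (hb : b ≠ 1) (n : ℕ) :
    syllables (((List.range n).map (fun i =>
        (CoprodI.of b * CoprodI.of a * CoprodI.of b * CoprodI.of c) *
          (CoprodI.of b * CoprodI.of f) ^ (i + 1))).prod *
      (CoprodI.of b * CoprodI.of a * CoprodI.of b * CoprodI.of c))
      = Ll a c f b n :=
  syllables_eq_of_prod (wordL a c f b ha hc hf hb n) (prod_Ll a c f b n)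


lemma seg_forward (hac : a ≠ c) (haf : a ≠ f) (hcf : c ≠ f) (n m k : ℕ)
    (t : (ℕ × ℕ) × ℕ)
    (h1 : t.1.1 < t.1.2) (h2 : t.1.2 < t.2)
    (h3 : (Ll a c f b n)[t.1.1]? = some (⟨true, a⟩ : Σ i, M i))
    (h4 : (Ll a c f b n)[t.2]? = some (⟨true, a⟩ : Σ i, M i))
    (h5 : (Ll a c f b n)[t.1.2]? = some (⟨true, c⟩ : Σ i, M i))
    (h6 : ∀ u ∈ Finset.Ioo t.1.1 t.2, (Ll a c f b n)[u]? ≠ some (⟨true, a⟩ : Σ i, M i))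
    (h7 : ∀ u ∈ Finset.Ioo t.1.1 t.2, u ≠ t.1.2 →
      (Ll a c f b n)[u]? ≠ some (⟨true, c⟩ : Σ i, M i))
    (h8 : t.1.2 - t.1.1 = m + 1) (h9 : t.2 - t.1.2 = k + 1) :
    ∃ i, i < n ∧ m = 1 ∧ k = 2 * i + 3 ∧
      t = ((posL i + 1, posL i + 3), posL (i + 1) + 1) := by
  obtain ⟨⟨p, r⟩, q⟩ := t
  simp only at h1 h2 h3 h4 h5 h6 h7 h8 h9
  rw [getA a c f b hac haf] at h3 h4
  rw [getC a c f b hac hcf] at h5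
  obtain ⟨i, hi, rfl⟩ := h3
  obtain ⟨j, hj, rfl⟩ := h4
  obtain ⟨i', hi', rfl⟩ := h5
  have hij : i < j := by
    have h0 : posL i < posL i' + 2 := by omega
    have h' : posL i < posL j := by omega
    exact posL_lt_iff.mp h'
  have hji : j = i + 1 := by
    by_contra hne
    have hij2 : i + 1 < j := by omega
    have hu : posL (i + 1) + 1 ∈ Finset.Ioo (posL i + 1) (posL j + 1) := by
      rw [Finset.mem_Ioo]
      exact ⟨by have := posL_lt (show i < i + 1 by omega); omega,
        by have := posL_lt hij2; omega⟩
    exact h6 _ hu ((getA a c f b hac haf n _).mpr ⟨i + 1, by omega, rfl⟩)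
  have e1 : posL j = posL i + 2 * i + 6 := by rw [hji, posL_succ]
  have hii' : i' = i := by
    by_contra hne
    rcases Nat.lt_or_ge i' i with h' | h'
    · have := posL_add h'
      omega
    · have h'' : i + 1 ≤ i' := by omega
      have := posL_le h''
      have := posL_succ i
      omega
  have e2 : posL i' = posL i := by rw [hii']
  refine ⟨i, by omega, by omega, by omega, ?_⟩
  rw [hii', hji]

lemma segCount_eq (ha : a ≠ 1) (hc : c ≠ 1) (hf : f ≠ 1) (hb : b ≠ 1)
    (hac : a ≠ c) (haf : a ≠ f) (hcf : c ≠ f) (n m k : ℕ) :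
    segCount2 (⟨true, a⟩ : Σ i, M i) (⟨true, c⟩ : Σ i, M i) m k
      (((List.range n).map (fun i =>
        (CoprodI.of b * CoprodI.of a * CoprodI.of b * CoprodI.of c) *
          (CoprodI.of b * CoprodI.of f) ^ (i + 1))).prod *
      (CoprodI.of b * CoprodI.of a * CoprodI.of b * CoprodI.of c))
      = if ∃ i, i < n ∧ m = 1 ∧ k = 2 * i + 3 then 1 else 0 := by
  unfold segCount2
  rw [syllables_gn a c f b ha hc hf hb n]
  have hlen : (Ll a c f b n).length = n * n + 5 * n + 4 := lenL a c f b n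
  by_cases h : ∃ i, i < n ∧ m = 1 ∧ k = 2 * i + 3
  · rw [if_pos h]
    obtain ⟨i, hin, rfl, rfl⟩ := h
    rw [Finset.card_eq_one]
    refine ⟨((posL i + 1, posL i + 3), posL (i + 1) + 1), ?_⟩
    rw [Finset.eq_singleton_iff_unique_mem]
    constructor
    · have hps : posL (i + 1) = posL i + 2 * i + 6 := posL_succ i
      have hb1 : posL (i + 1) + 3 < n * n + 5 * n + 4 :=
        posL_lt_lenL (show i + 1 ≤ n by omega)
      simp only [Finset.mem_filter, Finset.mem_product, Finset.mem_range, hlen]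
      refine ⟨⟨⟨by omega, by omega⟩, by omega⟩, by omega, by omega, ?_, ?_, ?_, ?_, ?_,
        by omega, by omega⟩
      · exact (getA a c f b hac haf n _).mpr ⟨i, by omega, rfl⟩
      · exact (getA a c f b hac haf n _).mpr ⟨i + 1, by omega, rfl⟩
      · exact (getC a c f b hac hcf n _).mpr ⟨i, by omega, rfl⟩
      · intro u hu hcon
        rw [Finset.mem_Ioo] at hu
        rw [getA a c f b hac haf] at hcon
        obtain ⟨i'', hi'', rfl⟩ := hcon
        clear hlen
        have hA : i < i'' := posL_lt_iff.mp (by omega)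
        have hB : i'' < i + 1 := posL_lt_iff.mp (by omega)
        omega
      · intro u hu hne hcon
        rw [Finset.mem_Ioo] at hu
        rw [getC a c f b hac hcf] at hcon
        obtain ⟨i'', hi'', rfl⟩ := hcon
        clear hlen
        have : i'' = i := by
          by_contra h''
          rcases Nat.lt_or_ge i'' i with h' | h'
          · have := posL_add h'
            omega
          · have := posL_le (show i + 1 ≤ i'' by omega)
            omega
        exact hne (by rw [this])
    · intro t ht
      simp only [Finset.mem_filter] at ht
      obtain ⟨-, h1, h2, h3, h4, h5, h6, h7, h8, h9⟩ := ht
      obtain ⟨j, hj, hm1, hk1, rfl⟩ :=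
        seg_forward a c f b hac haf hcf n 1 (2 * i + 3) t h1 h2 h3 h4 h5 h6 h7 h8 h9
      have hji : j = i := by omega
      rw [hji]
  · rw [if_neg h]
    rw [Finset.card_eq_zero]
    simp only [Finset.filter_eq_empty_iff]
    intro t _
    intro hcon
    obtain ⟨h1, h2, h3, h4, h5, h6, h7, h8, h9⟩ := hcon
    obtain ⟨j, hj, hm1, hk1, rfl⟩ :=
      seg_forward a c f b hac haf hcf n m k t h1 h2 h3 h4 h5 h6 h7 h8 h9
    exact h ⟨j, hj, hm1, hk1⟩

end D2Aux

/-- For `g_n = v w v w² ⋯ v wⁿ v` with `v = babc` and `w = bf`, one has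
`Δ₂(g_n) = n` for all `n ≥ 1`. -/
theorem Delta2_unbounded_sequence {M : Bool → Type*} [∀ b, Group (M b)]
    (a c f : M true) (b : M false)
    (ha : a ≠ 1) (hc : c ≠ 1) (hf : f ≠ 1) (hb : b ≠ 1)
    (hac : a ≠ c) (haf : a ≠ f) (hcf : c ≠ f)
    (n : ℕ) (hn : 1 ≤ n) :
    letI v : CoprodI M := CoprodI.of b * CoprodI.of a * CoprodI.of b * CoprodI.of c
    letI w : CoprodI M := CoprodI.of b * CoprodI.of f
    letI gn : CoprodI M := ((List.range n).map (fun i => v * w ^ (i + 1))).prod * v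
    Delta2 ⟨true, a⟩ ⟨true, c⟩ gn = (n : ℤ) := by
  show Delta2 (⟨true, a⟩ : Σ i, M i) (⟨true, c⟩ : Σ i, M i)
      (((List.range n).map (fun i =>
        (CoprodI.of b * CoprodI.of a * CoprodI.of b * CoprodI.of c) *
          (CoprodI.of b * CoprodI.of f) ^ (i + 1))).prod *
      (CoprodI.of b * CoprodI.of a * CoprodI.of b * CoprodI.of c)) = (n : ℤ)
  have hseg : ∀ m k : ℕ, segCount2 (⟨true, a⟩ : Σ i, M i) (⟨true, c⟩ : Σ i, M i) m k
      (((List.range n).map (fun i =>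
        (CoprodI.of b * CoprodI.of a * CoprodI.of b * CoprodI.of c) *
          (CoprodI.of b * CoprodI.of f) ^ (i + 1))).prod *
      (CoprodI.of b * CoprodI.of a * CoprodI.of b * CoprodI.of c))
      = if ∃ i, i < n ∧ m = 1 ∧ k = 2 * i + 3 then 1 else 0 :=
    D2Aux.segCount_eq a c f b ha hc hf hb hac haf hcf n
  set T : Finset (ℕ × ℕ) := (Finset.range n).image (fun i => (1, 2 * i + 3)) with hT
  have hF : ∀ p : ℕ × ℕ, (if p.1 < p.2 then
      ((segCount2 (⟨true, a⟩ : Σ i, M i) (⟨true, c⟩ : Σ i, M i) p.1 p.2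
        (((List.range n).map (fun i =>
          (CoprodI.of b * CoprodI.of a * CoprodI.of b * CoprodI.of c) *
            (CoprodI.of b * CoprodI.of f) ^ (i + 1))).prod *
        (CoprodI.of b * CoprodI.of a * CoprodI.of b * CoprodI.of c)) : ℤ) -
        segCount2 (⟨true, a⟩ : Σ i, M i) (⟨true, c⟩ : Σ i, M i) p.2 p.1
        (((List.range n).map (fun i =>
          (CoprodI.of b * CoprodI.of a * CoprodI.of b * CoprodI.of c) *
            (CoprodI.of b * CoprodI.of f) ^ (i + 1))).prod *
        (CoprodI.of b * CoprodI.of a * CoprodI.of b * CoprodI.of c)))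
      else 0) = if p ∈ T then (1 : ℤ) else 0 := by
    rintro ⟨m, k⟩
    simp only
    rw [hseg m k, hseg k m]
    by_cases hA : ∃ i, i < n ∧ m = 1 ∧ k = 2 * i + 3
    · obtain ⟨i, hi, rfl, rfl⟩ := hA
      have hmem : ((1 : ℕ), 2 * i + 3) ∈ T := by
        rw [hT]
        exact Finset.mem_image.mpr ⟨i, Finset.mem_range.mpr hi, rfl⟩
      rw [if_pos (show (1 : ℕ) < 2 * i + 3 by omega), if_pos hmem,
        if_pos ⟨i, hi, rfl, rfl⟩, if_neg (by rintro ⟨j, hj, h1, h2⟩; omega)]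
      norm_num
    · have hTn : ((m, k) : ℕ × ℕ) ∉ T := by
        rw [hT]
        simp only [Finset.mem_image, Finset.mem_range, Prod.mk.injEq, not_exists]
        rintro i ⟨hi, h1, h2⟩
        exact hA ⟨i, hi, h1.symm, h2.symm⟩
      rw [if_neg hTn]
      by_cases hmk : m < k
      · rw [if_pos hmk, if_neg hA, if_neg (by rintro ⟨j, hj, h1, h2⟩; omega)]
        norm_num
      · rw [if_neg hmk]
  unfold Delta2
  rw [finsum_congr hF]
  have hsupp : Function.support (fun p : ℕ × ℕ => if p ∈ T then (1 : ℤ) else 0) ⊆ ↑T := by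
    intro p hp
    by_contra hpT
    simp only [Function.mem_support] at hp
    exact hp (if_neg hpT)
  rw [finsum_eq_finset_sum_of_support_subset _ hsupp]
  rw [Finset.sum_congr rfl (fun p hp => if_pos hp), Finset.sum_const]
  have hinj : Function.Injective (fun i : ℕ => ((1, 2 * i + 3) : ℕ × ℕ)) := by
    intro x y hxy
    simp only [Prod.mk.injEq] at hxy
    omega
  rw [hT, Finset.card_image_of_injective _ hinj, Finset.card_range]
  simp
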